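/- If (s0, s1, s2, s3) is a solution of the 3-R̂(RRR)ER̂ system with s0 ∉ {1/2, −1/2}, then the orbit {±(s0,s1,s2,s3), ±(s1,−s0,−s3,s2), ±(s2,s3,−s0,−s1), ±(s3,−s2,s1,−s0)} consists of solutions of the system. -/
import Mathlib

/-- The 3-R̂(RRR)ER̂ spherical parallel manipulator system. -/
def SPMSystem (A1 A2 A3 B1 B2 B3 q0 q1 q2 q3 : ℝ) : Prop :=
  A1 * (q0^2 - q1^2 - q2^2 + q3^2) + 2 * B1 * (q2 * q3 - q0 * q1) = 0 ∧
  A2 * (q0^2 - q1^2 + q2^2 - q3^2) + 2 * B2 * (q1 * q2 - q0 * q3) = 0 ∧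
  A3 * (q0^2 + q1^2 - q2^2 - q3^2) + 2 * B3 * (q1 * q3 - q0 * q2) = 0 ∧
  q0^2 + q1^2 + q2^2 + q3^2 - 1 = 0

theorem stmt_6 (A1 A2 A3 B1 B2 B3 s0 s1 s2 s3 : ℝ)
    (h : SPMSystem A1 A2 A3 B1 B2 B3 s0 s1 s2 s3)
    (h0 : s0 ≠ 1/2) (h0' : s0 ≠ -(1/2)) :
    SPMSystem A1 A2 A3 B1 B2 B3 s0 s1 s2 s3 ∧
    SPMSystem A1 A2 A3 B1 B2 B3 (-s0) (-s1) (-s2) (-s3) ∧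
    SPMSystem A1 A2 A3 B1 B2 B3 s1 (-s0) (-s3) s2 ∧
    SPMSystem A1 A2 A3 B1 B2 B3 (-s1) s0 s3 (-s2) ∧
    SPMSystem A1 A2 A3 B1 B2 B3 s2 s3 (-s0) (-s1) ∧
    SPMSystem A1 A2 A3 B1 B2 B3 (-s2) (-s3) s0 s1 ∧
    SPMSystem A1 A2 A3 B1 B2 B3 s3 (-s2) s1 (-s0) ∧
    SPMSystem A1 A2 A3 B1 B2 B3 (-s3) s2 (-s1) s0 := by
  obtain ⟨h1, h2, h3, h4⟩ := h
  refine ⟨⟨?_,?_,?_,?_⟩,⟨?_,?_,?_,?_⟩,⟨?_,?_,?_,?_⟩,⟨?_,?_,?_,?_⟩,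
    ⟨?_,?_,?_,?_⟩,⟨?_,?_,?_,?_⟩,⟨?_,?_,?_,?_⟩,⟨?_,?_,?_,?_⟩⟩ <;>
  first
    | linear_combination h1 | linear_combination -h1
    | linear_combination h2 | linear_combination -h2
    | linear_combination h3 | linear_combination -h3
    | linear_combination h4 | linear_combination -h4
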